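/- Let (d, r) be an arithmetical structure on the wheel graph W_n (n ≥ 4) with r ≠ (1,1,...,1). Then exactly one of the following holds: (1) d_0 > n and d_i < 3 for some i ≥ 1; (2) d_0 < n and d_i > 3 for some i ≥ 1; (3) d_0 = n and there exist distinct i, j ≥ 1 with d_i < 3 and d_j > 3. -/
import Mathlib


/-- Predecessor of cycle vertex `i` in the cycle `v_1, …, v_n`. -/
def cyclePrev (n i : ℕ) : ℕ := if i = 1 then n else i - 1

/-- Successor of cycle vertex `i` in the cycle `v_1, …, v_n`. -/
def cycleNext (n i : ℕ) : ℕ := if i = n then 1 else i + 1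

/-- `(d, r)` is an arithmetical structure on the wheel graph `W_n`, whose hub `v_0`
is indexed by `0` and whose cycle vertices `v_1, …, v_n` are indexed by `1, …, n`. -/
def IsWheelArithStructure (n : ℕ) (d r : ℕ → ℕ) : Prop :=
  (∀ i ≤ n, 0 < d i) ∧ (∀ i ≤ n, 0 < r i) ∧
  (Finset.range (n + 1)).gcd r = 1 ∧
  d 0 * r 0 = ∑ i ∈ Finset.Icc 1 n, r i ∧
  ∀ i, 1 ≤ i → i ≤ n → d i * r i = r 0 + r (cyclePrev n i) + r (cycleNext n i)

lemma prevMem {n i : ℕ} (hn : 1 ≤ n) (hi : i ∈ Finset.Icc 1 n) :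
    cyclePrev n i ∈ Finset.Icc 1 n := by
  simp only [Finset.mem_Icc] at *
  unfold cyclePrev
  split <;> omega

lemma nextMem {n i : ℕ} (hn : 1 ≤ n) (hi : i ∈ Finset.Icc 1 n) :
    cycleNext n i ∈ Finset.Icc 1 n := by
  simp only [Finset.mem_Icc] at *
  unfold cycleNext
  split <;> omega

lemma nextPrev {n i : ℕ} (hi : i ∈ Finset.Icc 1 n) :
    cycleNext n (cyclePrev n i) = i := by
  simp only [Finset.mem_Icc] at hi
  by_cases h1 : i = 1
  · subst h1
    rw [cyclePrev, if_pos rfl, cycleNext, if_pos rfl]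
  · rw [cyclePrev, if_neg h1, cycleNext, if_neg (by omega)]
    omega

lemma prevNext {n i : ℕ} (hi : i ∈ Finset.Icc 1 n) :
    cyclePrev n (cycleNext n i) = i := by
  simp only [Finset.mem_Icc] at hi
  by_cases h1 : i = n
  · subst h1
    rw [cycleNext, if_pos rfl, cyclePrev, if_pos rfl]
  · rw [cycleNext, if_neg h1, cyclePrev, if_neg (by omega)]
    omega

/-- If `(d, r)` is an arithmetical structure on `W_n` (`n ≥ 4`) with `r ≠ (1, …, 1)`,
then exactly one of the three stated alternatives holds (they are mutually exclusive
since they are distinguished by the trichotomy of `d 0` versus `n`). -/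
theorem wheel_nontrivial_structure_trichotomy (n : ℕ) (hn : 4 ≤ n) (d r : ℕ → ℕ)
    (h : IsWheelArithStructure n d r) (hr : ¬ ∀ i ≤ n, r i = 1) :
    (n < d 0 ∧ ∃ i, 1 ≤ i ∧ i ≤ n ∧ d i < 3) ∨
    (d 0 < n ∧ ∃ i, 1 ≤ i ∧ i ≤ n ∧ 3 < d i) ∨
    (d 0 = n ∧ ∃ i j, 1 ≤ i ∧ i ≤ n ∧ 1 ≤ j ∧ j ≤ n ∧ i ≠ j ∧ d i < 3 ∧ 3 < d j) := by
  obtain ⟨hd, hrpos, hgcd, h0, hcyc⟩ := h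
  have hn1 : 1 ≤ n := by omega
  have hr0 : 0 < r 0 := hrpos 0 (by omega)
  -- reindexing sums along the cycle
  have sum_prev : ∑ i ∈ Finset.Icc 1 n, r (cyclePrev n i) = ∑ i ∈ Finset.Icc 1 n, r i := by
    refine Finset.sum_bij' (fun a _ => cyclePrev n a) (fun a _ => cycleNext n a)
      (fun a ha => prevMem hn1 ha) (fun a ha => nextMem hn1 ha)
      (fun a ha => nextPrev ha) (fun a ha => prevNext ha) (fun a ha => rfl)
  have sum_next : ∑ i ∈ Finset.Icc 1 n, r (cycleNext n i) = ∑ i ∈ Finset.Icc 1 n, r i := by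
    refine Finset.sum_bij' (fun a _ => cycleNext n a) (fun a _ => cyclePrev n a)
      (fun a ha => nextMem hn1 ha) (fun a ha => prevMem hn1 ha)
      (fun a ha => prevNext ha) (fun a ha => nextPrev ha) (fun a ha => rfl)
  -- key identity : ∑ d i * r i = n * r 0 + 2 * (d 0 * r 0)
  have key : ∑ i ∈ Finset.Icc 1 n, d i * r i = n * r 0 + 2 * (d 0 * r 0) := by
    have h1 : ∑ i ∈ Finset.Icc 1 n, d i * r i
        = ∑ i ∈ Finset.Icc 1 n, (r 0 + r (cyclePrev n i) + r (cycleNext n i)) := by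
      refine Finset.sum_congr rfl fun i hi => ?_
      simp only [Finset.mem_Icc] at hi
      exact hcyc i hi.1 hi.2
    rw [h1, Finset.sum_add_distrib, Finset.sum_add_distrib, sum_prev, sum_next,
      Finset.sum_const, Nat.card_Icc, smul_eq_mul, ← h0]
    have : n + 1 - 1 = n := by omega
    rw [this]; ring
  rcases lt_trichotomy n (d 0) with hlt | heq | hgt
  · -- d 0 > n : some d i < 3
    left
    refine ⟨hlt, ?_⟩
    by_contra hc
    push_neg at hc
    have hle : 3 * (d 0 * r 0) ≤ ∑ i ∈ Finset.Icc 1 n, d i * r i := by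
      rw [h0, Finset.mul_sum]
      refine Finset.sum_le_sum fun i hi => ?_
      simp only [Finset.mem_Icc] at hi
      exact Nat.mul_le_mul_right _ (hc i hi.1 hi.2)
    rw [key] at hle
    nlinarith
  · -- d 0 = n
    right; right
    refine ⟨heq.symm, ?_⟩
    have key2 : ∑ i ∈ Finset.Icc 1 n, d i * r i = ∑ i ∈ Finset.Icc 1 n, 3 * r i := by
      rw [key, ← Finset.mul_sum, ← h0, ← heq]; ring
    by_cases hall : ∀ i, 1 ≤ i → i ≤ n → d i = 3
    · -- all d i = 3 forces r ≡ 1, contradiction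
      exfalso
      have hne : (Finset.Icc 1 n).Nonempty := ⟨1, by simp [Finset.mem_Icc]; omega⟩
      obtain ⟨iM, hiM, hM⟩ := Finset.exists_max_image (Finset.Icc 1 n) r hne
      obtain ⟨im, him, hm⟩ := Finset.exists_min_image (Finset.Icc 1 n) r hne
      have hiM' := Finset.mem_Icc.mp hiM
      have him' := Finset.mem_Icc.mp him
      have hMe : 3 * r iM = r 0 + r (cyclePrev n iM) + r (cycleNext n iM) := by
        rw [← hall iM hiM'.1 hiM'.2]; exact hcyc iM hiM'.1 hiM'.2
      have hme : 3 * r im = r 0 + r (cyclePrev n im) + r (cycleNext n im) := by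
        rw [← hall im him'.1 him'.2]; exact hcyc im him'.1 him'.2
      have hMle : r iM ≤ r 0 := by
        have h1 := hM _ (prevMem hn1 hiM)
        have h2 := hM _ (nextMem hn1 hiM)
        omega
      have hmge : r 0 ≤ r im := by
        have h1 := hm _ (prevMem hn1 him)
        have h2 := hm _ (nextMem hn1 him)
        omega
      have hconst : ∀ i, 1 ≤ i → i ≤ n → r i = r 0 := by
        intro i h1 h2
        have ha := hM i (Finset.mem_Icc.mpr ⟨h1, h2⟩)
        have hb := hm i (Finset.mem_Icc.mpr ⟨h1, h2⟩)
        omega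
      have hdvd : r 0 ∣ (Finset.range (n + 1)).gcd r := by
        refine Finset.dvd_gcd fun i hi => ?_
        simp only [Finset.mem_range] at hi
        rcases Nat.eq_zero_or_pos i with rfl | hi1
        · exact dvd_rfl
        · rw [hconst i hi1 (by omega)]
      rw [hgcd] at hdvd
      have hr01 : r 0 = 1 := Nat.eq_one_of_dvd_one hdvd
      refine hr fun i hi => ?_
      rcases Nat.eq_zero_or_pos i with rfl | hi1
      · exact hr01
      · rw [hconst i hi1 hi, hr01]
    · push_neg at hall
      obtain ⟨i0, hi01, hi0n, hi0ne⟩ := hall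
      -- there is some j with d j < 3
      have hsmall : ∃ j, 1 ≤ j ∧ j ≤ n ∧ d j < 3 := by
        by_contra hc
        push_neg at hc
        have : ∑ i ∈ Finset.Icc 1 n, 3 * r i < ∑ i ∈ Finset.Icc 1 n, d i * r i := by
          refine Finset.sum_lt_sum (fun i hi => ?_) ⟨i0, Finset.mem_Icc.mpr ⟨hi01, hi0n⟩, ?_⟩
          · simp only [Finset.mem_Icc] at hi
            exact Nat.mul_le_mul_right _ (hc i hi.1 hi.2)
          · have h4 : 4 ≤ d i0 := by have := hc i0 hi01 hi0n; omega
            have := hrpos i0 (by omega)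
            calc 3 * r i0 < 4 * r i0 := by omega
              _ ≤ d i0 * r i0 := Nat.mul_le_mul_right _ h4
        omega
      obtain ⟨j, hj1, hjn, hj3⟩ := hsmall
      -- there is some k with d k > 3
      have hbig : ∃ k, 1 ≤ k ∧ k ≤ n ∧ 3 < d k := by
        by_contra hc
        push_neg at hc
        have : ∑ i ∈ Finset.Icc 1 n, d i * r i < ∑ i ∈ Finset.Icc 1 n, 3 * r i := by
          refine Finset.sum_lt_sum (fun i hi => ?_) ⟨j, Finset.mem_Icc.mpr ⟨hj1, hjn⟩, ?_⟩
          · simp only [Finset.mem_Icc] at hi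
            exact Nat.mul_le_mul_right _ (hc i hi.1 hi.2)
          · have := hrpos j (by omega)
            calc d j * r j ≤ 2 * r j := Nat.mul_le_mul_right _ (by omega)
              _ < 3 * r j := by omega
        omega
      obtain ⟨k, hk1, hkn, hk3⟩ := hbig
      exact ⟨j, k, hj1, hjn, hk1, hkn, by rintro rfl; omega, hj3, hk3⟩
  · -- d 0 < n : some d i > 3
    right; left
    refine ⟨hgt, ?_⟩
    by_contra hc
    push_neg at hc
    have hle : ∑ i ∈ Finset.Icc 1 n, d i * r i ≤ 3 * (d 0 * r 0) := by
      rw [h0, Finset.mul_sum]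
      refine Finset.sum_le_sum fun i hi => ?_
      simp only [Finset.mem_Icc] at hi
      exact Nat.mul_le_mul_right _ (hc i hi.1 hi.2)
    rw [key] at hle
    nlinarith
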